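/- Let Q(x) = inf{f(y,x) : y ∈ Y, Ay + Bx = b, g(y,x) ≤ 0}, where f is jointly convex and differentiable, each component of g is jointly convex and differentiable, Y is nonempty closed convex, and a Slater condition holds for every x ∈ X (existence of y_x ∈ ri(Y) with By_x feasible and g(y_x,x) < 0). Let ŷ be an ε-optimal feasible primal solution and (λ̂, μ̂) an ε-optimal feasible dual solution for the problem at x̄, and let η = max_{y ∈ Y} ⟨∇_y L_{x̄}(ŷ, λ̂, μ̂), ŷ − y⟩ be finite, where L_x(y,λ,μ) = f(y,x) + λ^T(Bx + Ay − b) + μ^T g(y,x). Then the affine function C(x) = L_{x̄}(ŷ, λ̂, μ̂) − η + ⟨∇_x L_{x̄}(ŷ, λ̂, μ̂), x − x̄⟩ satisfies C(x) ≤ Q(x) for all x ∈ X, and Q(x̄) − C(x̄) ≤ ε + η. -/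

import Mathlib

open Matrix
open Topology Filter Set

private lemma sum_convexOn {E ι : Type*} [AddCommGroup E] [Module ℝ E]
    (t : Finset ι) (f : ι → E → ℝ) (h : ∀ i ∈ t, ConvexOn ℝ Set.univ (f i)) :
    ConvexOn ℝ Set.univ (fun x => ∑ i ∈ t, f i x) := by
  classical
  induction t using Finset.induction_on with
  | empty => simpa using convexOn_const 0 convex_univ
  | insert a s hni ih =>
    simp only [Finset.sum_insert hni]
    exact (h a (Finset.mem_insert_self a s)).add
      (ih fun i hi => h i (Finset.mem_insert_of_mem hi))

private lemma grad_ineq {E : Type*} [NormedAddCommGroup E] [NormedSpace ℝ E]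
    {F : E → ℝ} (hconv : ConvexOn ℝ Set.univ F) {z : E} {F' : E →L[ℝ] ℝ}
    (hd : HasFDerivAt F F' z) (w : E) : F z + F' (w - z) ≤ F w := by
  have hline : HasDerivAt (fun t : ℝ => F (z + t • (w - z))) (F' (w - z)) 0 := by
    have h1 : HasDerivAt (fun t : ℝ => z + t • (w - z)) (w - z) 0 := by
      simpa using ((hasDerivAt_id (0:ℝ)).smul_const (w - z)).const_add z
    have hd' : HasFDerivAt F F' ((fun t : ℝ => z + t • (w - z)) 0) := by simpa using hd
    exact hd'.comp_hasDerivAt (0:ℝ) h1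
  have hslope : Filter.Tendsto (slope (fun t : ℝ => F (z + t • (w - z))) 0)
      (𝓝[>] (0:ℝ)) (𝓝 (F' (w - z))) :=
    (hasDerivAt_iff_tendsto_slope.mp hline).mono_left
      (nhdsWithin_mono _ fun t ht => ne_of_gt ht)
  have hbound : ∀ᶠ t in 𝓝[>] (0:ℝ),
      slope (fun t : ℝ => F (z + t • (w - z))) 0 t ≤ F w - F z := by
    filter_upwards [Ioc_mem_nhdsGT (zero_lt_one)] with t ht
    have ht0 : (0:ℝ) < t := ht.1
    have hcvx : F (z + t • (w - z)) ≤ (1 - t) * F z + t * F w := by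
      have := hconv.2 (Set.mem_univ z) (Set.mem_univ w)
        (by linarith [ht.2] : (0:ℝ) ≤ 1 - t) ht0.le (by ring)
      have heq : (1 - t) • z + t • w = z + t • (w - z) := by
        simp [smul_sub, sub_smul]; abel
      simpa [heq, smul_eq_mul] using this
    rw [slope_def_field]
    simp only [sub_zero, zero_smul, add_zero]
    rw [div_le_iff₀ ht0]
    nlinarith
  have := le_of_tendsto hslope hbound
  linarith

/-- Lagrangian L_x(y, λ, μ) = f(y,x) + λᵀ(Bx + Ay − b) + μᵀ g(y,x). -/
noncomputable def stmt1Lagr {n m q p : ℕ}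
    (A : Matrix (Fin q) (Fin n) ℝ) (B : Matrix (Fin q) (Fin m) ℝ) (b : Fin q → ℝ)
    (f : (Fin n → ℝ) → (Fin m → ℝ) → ℝ)
    (g : (Fin n → ℝ) → (Fin m → ℝ) → Fin p → ℝ)
    (lam : Fin q → ℝ) (mu : Fin p → ℝ)
    (y : Fin n → ℝ) (x : Fin m → ℝ) : ℝ :=
  f y x + lam ⬝ᵥ (B *ᵥ x + A *ᵥ y - b) + mu ⬝ᵥ g y x

/-- Inexact cut for the value function of a convex nonlinear program
(Proposition 2.2). -/
theorem stmt_1 {n m q p : ℕ}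
    (X : Set (Fin m → ℝ)) (hXne : X.Nonempty) (hXcomp : IsCompact X) (hXconv : Convex ℝ X)
    (Y : Set (Fin n → ℝ)) (hYne : Y.Nonempty) (hYcl : IsClosed Y) (hYconv : Convex ℝ Y)
    (A : Matrix (Fin q) (Fin n) ℝ) (B : Matrix (Fin q) (Fin m) ℝ) (b : Fin q → ℝ)
    (f : (Fin n → ℝ) → (Fin m → ℝ) → ℝ)
    (g : (Fin n → ℝ) → (Fin m → ℝ) → Fin p → ℝ)
    (hfconv : ConvexOn ℝ Set.univ (fun z : (Fin n → ℝ) × (Fin m → ℝ) => f z.1 z.2))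
    (hgconv : ∀ i, ConvexOn ℝ Set.univ (fun z : (Fin n → ℝ) × (Fin m → ℝ) => g z.1 z.2 i))
    (hfdiff : Differentiable ℝ (fun z : (Fin n → ℝ) × (Fin m → ℝ) => f z.1 z.2))
    (hgdiff : ∀ i, Differentiable ℝ (fun z : (Fin n → ℝ) × (Fin m → ℝ) => g z.1 z.2 i))
    -- Slater condition at every x ∈ X:
    (hslater : ∀ x ∈ X, ∃ y ∈ intrinsicInterior ℝ Y,
      A *ᵥ y + B *ᵥ x = b ∧ ∀ i, g y x i < 0)
    -- Q x is the (finite) optimal value of the primal problem at x: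
    (Q : (Fin m → ℝ) → ℝ)
    (hQ : ∀ x ∈ X, IsGLB {v : ℝ | ∃ y ∈ Y,
      A *ᵥ y + B *ᵥ x = b ∧ (∀ i, g y x i ≤ 0) ∧ v = f y x} (Q x))
    (xbar : Fin m → ℝ) (hxbar : xbar ∈ X)
    (ε : ℝ) (hε : 0 ≤ ε)
    -- ε-optimal feasible primal solution ŷ at x̄:
    (yhat : Fin n → ℝ) (hyhatY : yhat ∈ Y)
    (hyhatfeas : A *ᵥ yhat + B *ᵥ xbar = b ∧ ∀ i, g yhat xbar i ≤ 0)
    (hyhatopt : f yhat xbar ≤ Q xbar + ε)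
    -- ε-optimal feasible dual solution (λ̂, μ̂) at x̄ (by strong duality the
    -- dual optimal value equals Q x̄, so θ_x̄(λ̂, μ̂) ≥ Q x̄ − ε):
    (lam : Fin q → ℝ) (mu : Fin p → ℝ) (hmu : 0 ≤ mu)
    (hdualopt : ∀ y ∈ Y, stmt1Lagr A B b f g lam mu y xbar ≥ Q xbar - ε)
    -- η = ℓ(ŷ, x̄, λ̂, μ̂) = max_{y ∈ Y} ⟨∇_y L_x̄(ŷ, λ̂, μ̂), ŷ − y⟩ is finite:
    (η : ℝ)
    (hη : IsLUB {v : ℝ | ∃ y ∈ Y,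
      v = fderiv ℝ (fun y' => stmt1Lagr A B b f g lam mu y' xbar) yhat (yhat - y)} η) :
    (∀ x ∈ X,
      stmt1Lagr A B b f g lam mu yhat xbar - η +
        fderiv ℝ (fun x' => stmt1Lagr A B b f g lam mu yhat x') xbar (x - xbar) ≤ Q x) ∧
    Q xbar - (stmt1Lagr A B b f g lam mu yhat xbar - η) ≤ ε + η := by
  set F : (Fin n → ℝ) × (Fin m → ℝ) → ℝ :=
    fun z => stmt1Lagr A B b f g lam mu z.1 z.2 with hF
  -- convexity of the Lagrangian jointly in (y, x)
  have haff : ConvexOn ℝ Set.univ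
      (fun z : (Fin n → ℝ) × (Fin m → ℝ) => lam ⬝ᵥ (B *ᵥ z.2 + A *ᵥ z.1 - b)) := by
    refine ⟨convex_univ, fun u _ v _ a c ha hc hac => le_of_eq ?_⟩
    simp only [Prod.smul_snd, Prod.smul_fst, Prod.fst_add, Prod.snd_add,
      Matrix.mulVec_add, Matrix.mulVec_smul, dotProduct_sub,
      dotProduct_add, dotProduct_smul, smul_eq_mul]
    linear_combination (lam ⬝ᵥ b) * hac
  have hgsum : ConvexOn ℝ Set.univ
      (fun z : (Fin n → ℝ) × (Fin m → ℝ) => mu ⬝ᵥ g z.1 z.2) := by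
    have := sum_convexOn (Finset.univ : Finset (Fin p))
      (fun i (z : (Fin n → ℝ) × (Fin m → ℝ)) => mu i • g z.1 z.2 i)
      (fun i _ => (hgconv i).smul (hmu i))
    simpa [dotProduct, smul_eq_mul] using this
  have hFconv : ConvexOn ℝ Set.univ F := by
    have := (hfconv.add haff).add hgsum
    simpa [hF, stmt1Lagr, Pi.add_def] using this
  -- differentiability
  have haffdiff : Differentiable ℝ
      (fun z : (Fin n → ℝ) × (Fin m → ℝ) => lam ⬝ᵥ (B *ᵥ z.2 + A *ᵥ z.1 - b)) := by
    simp only [dotProduct, Matrix.mulVec, Pi.add_apply, Pi.sub_apply]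
    fun_prop
  have hgsumdiff : Differentiable ℝ
      (fun z : (Fin n → ℝ) × (Fin m → ℝ) => mu ⬝ᵥ g z.1 z.2) := by
    simp only [dotProduct]
    exact Differentiable.fun_sum (fun i _ => (hgdiff i).const_mul (mu i))
  have hFdiff : Differentiable ℝ F := by
    have := (hfdiff.add haffdiff).add hgsumdiff
    simpa [hF, stmt1Lagr, Pi.add_def] using this
  set F' := fderiv ℝ F (yhat, xbar) with hF'def
  have hF' : HasFDerivAt F F' (yhat, xbar) := (hFdiff (yhat, xbar)).hasFDerivAt
  -- the y-slice derivative
  have hincl1 : HasFDerivAt (fun y' : Fin n → ℝ => (y', xbar))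
      ((ContinuousLinearMap.id ℝ (Fin n → ℝ)).prod 0) yhat :=
    (hasFDerivAt_id yhat).prodMk (hasFDerivAt_const xbar yhat)
  have hD1 : HasFDerivAt (fun y' => stmt1Lagr A B b f g lam mu y' xbar)
      (F'.comp ((ContinuousLinearMap.id ℝ (Fin n → ℝ)).prod 0)) yhat :=
    by have := hF'.comp yhat hincl1; exact this
  have hD1e : ∀ v, fderiv ℝ (fun y' => stmt1Lagr A B b f g lam mu y' xbar) yhat v
      = F' (v, 0) := by
    intro v
    rw [hD1.fderiv]
    simp
  -- the x-slice derivative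
  have hincl2 : HasFDerivAt (fun x' : Fin m → ℝ => (yhat, x'))
      ((0 : (Fin m → ℝ) →L[ℝ] (Fin n → ℝ)).prod (ContinuousLinearMap.id ℝ (Fin m → ℝ))) xbar :=
    (hasFDerivAt_const yhat xbar).prodMk (hasFDerivAt_id xbar)
  have hD2 : HasFDerivAt (fun x' => stmt1Lagr A B b f g lam mu yhat x')
      (F'.comp ((0 : (Fin m → ℝ) →L[ℝ] (Fin n → ℝ)).prod
        (ContinuousLinearMap.id ℝ (Fin m → ℝ)))) xbar :=
    hF'.comp xbar hincl2
  have hD2e : ∀ w, fderiv ℝ (fun x' => stmt1Lagr A B b f g lam mu yhat x') xbar w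
      = F' (0, w) := by
    intro w
    rw [hD2.fderiv]
    simp
  constructor
  · intro x hx
    refine (hQ x hx).2 ?_
    rintro v ⟨y, hyY, hfeas, hgle, rfl⟩
    -- L(y,x) ≤ f(y,x)
    have hLle : F (y, x) ≤ f y x := by
      have h0 : B *ᵥ x + A *ᵥ y - b = 0 := by
        rw [add_comm, hfeas, sub_self]
      have hmg : mu ⬝ᵥ g y x ≤ 0 :=
        Finset.sum_nonpos fun i _ =>
          mul_nonpos_iff.mpr (Or.inl ⟨hmu i, hgle i⟩)
      simp only [hF, stmt1Lagr, h0, dotProduct_zero, add_zero]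
      linarith
    -- gradient inequality
    have hgi := grad_ineq hFconv hF' (y, x)
    have hsplit : F' ((y, x) - (yhat, xbar)) = F' (y - yhat, 0) + F' (0, x - xbar) := by
      rw [← map_add]
      congr 1
      simp [Prod.ext_iff]
    -- η bound
    have hηb : F' (yhat - y, 0) ≤ η := by
      refine hη.1 ⟨y, hyY, ?_⟩
      rw [hD1e]
    have hneg : F' (y - yhat, 0) = - F' (yhat - y, 0) := by
      rw [← map_neg]
      congr 1
      simp [Prod.ext_iff]
    rw [hD2e]
    have : F (yhat, xbar) = stmt1Lagr A B b f g lam mu yhat xbar := rfl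
    rw [hsplit] at hgi
    linarith
  · have := hdualopt yhat hyhatY
    linarith
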